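/- Properties of the function β. The function β(A) = 16π( A + (1/2)A² log((A−1)/(A+1)) + 4A/(3(A²−1)) ) is strictly monotonically decreasing on the interval (1,∞) and maps (1,∞) bijectively onto (0,∞); in particular β(A) > 0 for all A > 1, β(A) → +∞ as A → 1⁺, and β(A) → 0 as A → +∞, so β has an inverse function γ : (0,∞) → (1,∞). -/

import Mathlib

open Real Filter

-- limit of log(A+1)-log(A-1) at top
lemma tendstoL : Tendsto (fun A : ℝ => Real.log (A+1) - Real.log (A-1)) atTop (nhds 0) := by
  have h1 : Tendsto (fun A : ℝ => (A+1)/(A-1)) atTop (nhds 1) := by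
    have : Tendsto (fun A : ℝ => 1 + 2/(A-1)) atTop (nhds 1) := by
      have h2 : Tendsto (fun A : ℝ => 2/(A-1)) atTop (nhds 0) :=
        Tendsto.div_atTop tendsto_const_nhds (tendsto_atTop_add_const_right _ _ tendsto_id)
      simpa using tendsto_const_nhds.add h2
    refine this.congr' ?_
    filter_upwards [eventually_gt_atTop (1:ℝ)] with A hA
    have : A - 1 ≠ 0 := by linarith
    field_simp
    ring
  have h2 : Tendsto (fun A : ℝ => Real.log ((A+1)/(A-1))) atTop (nhds 0) := by
    have := (Real.continuousAt_log (one_ne_zero)).tendsto.comp h1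
    simpa [Function.comp_def] using this
  refine h2.congr' ?_
  filter_upwards [eventually_gt_atTop (1:ℝ)] with A hA
  rw [Real.log_div (by linarith) (by linarith)]

lemma nonneg_of_anti {f : ℝ → ℝ} (hf : AntitoneOn f (Set.Ioi 1))
    (h0 : Tendsto f atTop (nhds 0)) {A : ℝ} (hA : 1 < A) : 0 ≤ f A := by
  refine le_of_tendsto h0 ?_
  filter_upwards [eventually_ge_atTop A] with B hB
  exact hf hA (lt_of_lt_of_le hA hB) hB

lemma key_lower {A : ℝ} (hA : 1 < A) : 2/A ≤ Real.log (A+1) - Real.log (A-1) := by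
  have H : 0 ≤ Real.log (A+1) - Real.log (A-1) - 2/A := by
    refine nonneg_of_anti (f := fun A => Real.log (A+1) - Real.log (A-1) - 2/A) ?_ ?_ hA
    · have hderiv : ∀ x ∈ Set.Ioi (1:ℝ), HasDerivAt (fun A => Real.log (A+1) - Real.log (A-1) - 2/A)
          (1/(x+1) - 1/(x-1) + 2/x^2) x := by
        intro x hx
        simp only [Set.mem_Ioi] at hx
        have h1 : HasDerivAt (fun A : ℝ => Real.log (A+1)) (1/(x+1)) x := by
          have := ((hasDerivAt_id x).add_const 1).log (by simp only [id_eq]; linarith)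
          simpa using this
        have h2 : HasDerivAt (fun A : ℝ => Real.log (A-1)) (1/(x-1)) x := by
          have := ((hasDerivAt_id x).sub_const 1).log (by simp only [id_eq]; linarith)
          simpa using this
        have hx0 : x ≠ 0 := by linarith
        have h3 : HasDerivAt (fun A : ℝ => 2/A) (-2/x^2) x := by
          have := (hasDerivAt_inv hx0).const_mul (2:ℝ)
          refine this.congr_deriv ?_
          field_simp
        have := (h1.sub h2).sub h3
        refine this.congr_deriv ?_
        ring
      refine antitoneOn_of_deriv_nonpos (convex_Ioi 1) ?_ ?_ ?_
      · intro x hx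
        exact ((hderiv x hx).continuousAt).continuousWithinAt
      · intro x hx
        rw [interior_Ioi] at hx
        exact ((hderiv x hx).differentiableAt).differentiableWithinAt
      · intro x hx
        rw [interior_Ioi] at hx
        rw [(hderiv x hx).deriv]
        simp only [Set.mem_Ioi] at hx
        have hx0 : (0:ℝ) < x := by linarith
        have hne1 : x + 1 ≠ 0 := by linarith
        have hne2 : x - 1 ≠ 0 := by linarith
        have hne3 : x ≠ 0 := by linarith
        have hx2 : (1:ℝ) < x^2 := one_lt_pow₀ hx (by norm_num)
        have hne4 : x^2 - 1 ≠ 0 := by linarith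
        have h : 1/(x+1) - 1/(x-1) + 2/x^2 = -2/(x^2*(x^2-1)) := by
          field_simp
          ring
        rw [h]
        have hpos : (0:ℝ) < x^2*(x^2-1) := mul_pos (by positivity) (by linarith)
        exact le_of_lt (div_neg_of_neg_of_pos (by norm_num) hpos)
    · have := tendstoL.sub (Tendsto.div_atTop (tendsto_const_nhds (x := (2:ℝ))) tendsto_id)
      simpa using this
  linarith

lemma key_upper {A : ℝ} (hA : 1 < A) :
    Real.log (A+1) - Real.log (A-1) ≤ 2/A + 2/(3*A*(A^2-1)) := by
  have H : 0 ≤ 2/A + 2/(3*A*(A^2-1)) - (Real.log (A+1) - Real.log (A-1)) := by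
    refine nonneg_of_anti
      (f := fun A => 2/A + 2/(3*A*(A^2-1)) - (Real.log (A+1) - Real.log (A-1))) ?_ ?_ hA
    · have hderiv : ∀ x ∈ Set.Ioi (1:ℝ),
          HasDerivAt (fun A => 2/A + 2/(3*A*(A^2-1)) - (Real.log (A+1) - Real.log (A-1)))
          (-4/(3*x^2*(x^2-1)^2)) x := by
        intro x hx
        simp only [Set.mem_Ioi] at hx
        have hx0 : x ≠ 0 := by linarith
        have hx2 : (1:ℝ) < x^2 := one_lt_pow₀ hx (by norm_num)
        have hne1 : x + 1 ≠ 0 := by linarith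
        have hne2 : x - 1 ≠ 0 := by linarith
        have hne4 : x^2 - 1 ≠ 0 := by linarith
        have h1 : HasDerivAt (fun A : ℝ => Real.log (A+1)) (1/(x+1)) x := by
          have := ((hasDerivAt_id x).add_const 1).log (by simp only [id_eq]; linarith)
          simpa using this
        have h2 : HasDerivAt (fun A : ℝ => Real.log (A-1)) (1/(x-1)) x := by
          have := ((hasDerivAt_id x).sub_const 1).log (by simp only [id_eq]; linarith)
          simpa using this
        have h3 : HasDerivAt (fun A : ℝ => 2/A) (-2/x^2) x := by
          have := (hasDerivAt_inv hx0).const_mul (2:ℝ)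
          refine this.congr_deriv ?_
          field_simp
        have hg : HasDerivAt (fun A : ℝ => 3*A*(A^2-1)) (3*1*(x^2-1) + 3*x*(2*x^(2-1))) x := by
          exact ((hasDerivAt_id x).const_mul 3).mul ((hasDerivAt_pow 2 x).sub_const 1)
        have hgx : 3*x*(x^2-1) ≠ 0 :=
          ne_of_gt (mul_pos (by linarith : (0:ℝ) < 3*x) (by linarith : (0:ℝ) < x^2-1))
        have h4 : HasDerivAt (fun A : ℝ => 2/(3*A*(A^2-1)))
            ((0*(3*x*(x^2-1)) - 2*(3*1*(x^2-1) + 3*x*(2*x^(2-1))))/(3*x*(x^2-1))^2) x :=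
          (hasDerivAt_const x 2).div hg hgx
        have htot := (h3.add h4).sub (h1.sub h2)
        refine htot.congr_deriv ?_
        field_simp
        ring
      refine antitoneOn_of_deriv_nonpos (convex_Ioi 1) ?_ ?_ ?_
      · intro x hx
        exact ((hderiv x hx).continuousAt).continuousWithinAt
      · intro x hx
        rw [interior_Ioi] at hx
        exact ((hderiv x hx).differentiableAt).differentiableWithinAt
      · intro x hx
        rw [interior_Ioi] at hx
        rw [(hderiv x hx).deriv]
        simp only [Set.mem_Ioi] at hx
        have hx2 : (1:ℝ) < x^2 := one_lt_pow₀ hx (by norm_num)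
        have hpos : (0:ℝ) < 3*x^2*(x^2-1)^2 :=
          mul_pos (by positivity) (pow_pos (by linarith) 2)
        exact le_of_lt (div_neg_of_neg_of_pos (by norm_num) hpos)
    · have h1 : Tendsto (fun A : ℝ => 2/A) atTop (nhds 0) :=
        Tendsto.div_atTop tendsto_const_nhds tendsto_id
      have hdenom : Tendsto (fun A : ℝ => 3*A*(A^2-1)) atTop atTop := by
        refine tendsto_atTop_mono' _ ?_ tendsto_id
        filter_upwards [eventually_ge_atTop (2:ℝ)] with A h2A
        simp only [id_eq]
        nlinarith [sq_nonneg A, sq_nonneg (A-2)]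
      have h2 : Tendsto (fun A : ℝ => 2/(3*A*(A^2-1))) atTop (nhds 0) :=
        Tendsto.div_atTop tendsto_const_nhds hdenom
      have := (h1.add h2).sub tendstoL
      simpa using this
  linarith

noncomputable section

def betaL (A : ℝ) : ℝ :=
  16 * π * (A + A ^ 2 / 2 * Real.log ((A - 1) / (A + 1)) + 4 * A / (3 * (A ^ 2 - 1)))

lemma betaL_hasDerivAt {x : ℝ} (hx : 1 < x) :
    HasDerivAt betaL
      (16*π*((2 - (x^2+7)/(3*(x^2-1)^2)) - x*(Real.log (x+1) - Real.log (x-1)))) x := by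
  have hx0 : (0:ℝ) < x := by linarith
  have hne1 : x + 1 ≠ 0 := by linarith
  have hne2 : x - 1 ≠ 0 := by linarith
  have hx2 : (1:ℝ) < x^2 := one_lt_pow₀ hx (by norm_num)
  have hne4 : x^2 - 1 ≠ 0 := by linarith
  have hq : HasDerivAt (fun A : ℝ => (A-1)/(A+1))
      ((1*(x+1) - (x-1)*1)/(x+1)^2) x := by
    have := (((hasDerivAt_id x).sub_const 1).fun_div ((hasDerivAt_id x).add_const 1)
      (by simp only [id_eq]; linarith))
    simpa using this
  have hqx : (x-1)/(x+1) ≠ 0 := div_ne_zero hne2 hne1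
  have hlog : HasDerivAt (fun A : ℝ => Real.log ((A-1)/(A+1)))
      (((1*(x+1) - (x-1)*1)/(x+1)^2) / ((x-1)/(x+1))) x := hq.log hqx
  have hsq : HasDerivAt (fun A : ℝ => A^2/2) (2*x^(2-1)/2) x := (hasDerivAt_pow 2 x).div_const 2
  have hprod := hsq.mul hlog
  have hd : HasDerivAt (fun A : ℝ => 3*(A^2-1)) (3*(2*x^(2-1))) x :=
    ((hasDerivAt_pow 2 x).sub_const 1).const_mul 3
  have hc : HasDerivAt (fun A : ℝ => 4*A) 4 x := by
    simpa using (hasDerivAt_id x).const_mul (4:ℝ)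
  have hdx : 3*(x^2-1) ≠ 0 := by
    intro h; apply hne4; linarith
  have hlast := hc.div hd hdx
  have htot := (((hasDerivAt_id x).add hprod).add hlast).const_mul (16*π)
  refine htot.congr_deriv ?_
  rw [Real.log_div hne2 hne1]
  field_simp
  ring

lemma betaL_bounds {A : ℝ} (hA : 1 < A) :
    16*π*(A/(A^2-1)) ≤ betaL A ∧ betaL A ≤ 16*π*(4*A/(3*(A^2-1))) := by
  have hA0 : (0:ℝ) < A := by linarith
  have hne1 : A + 1 ≠ 0 := by linarith
  have hne2 : A - 1 ≠ 0 := by linarith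
  have hA2 : (1:ℝ) < A^2 := one_lt_pow₀ hA (by norm_num)
  have hu : (0:ℝ) < A^2 - 1 := by linarith
  set L := Real.log (A+1) - Real.log (A-1) with hL
  have hL1 : 2/A ≤ L := key_lower hA
  have hL2 : L ≤ 2/A + 2/(3*A*(A^2-1)) := key_upper hA
  have hbeta : betaL A = 16*π*(A - A^2/2*L + 4*A/(3*(A^2-1))) := by
    unfold betaL
    rw [Real.log_div hne2 hne1]
    ring
  have e1 : (A^2/2)*(2/A) = A := by field_simp
  have e2 : (A^2/2)*(2/A + 2/(3*A*(A^2-1))) = A + A/(3*(A^2-1)) := by field_simp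
  have m1 : A ≤ A^2/2 * L := by
    calc A = (A^2/2)*(2/A) := e1.symm
    _ ≤ A^2/2 * L := mul_le_mul_of_nonneg_left hL1 (by positivity)
  have m2 : A^2/2 * L ≤ A + A/(3*(A^2-1)) := by
    calc A^2/2 * L ≤ (A^2/2)*(2/A + 2/(3*A*(A^2-1))) :=
          mul_le_mul_of_nonneg_left hL2 (by positivity)
    _ = A + A/(3*(A^2-1)) := e2
  have e3 : -(A/(3*(A^2-1))) + 4*A/(3*(A^2-1)) = A/(A^2-1) := by
    field_simp
    ring
  have hπ : (0:ℝ) < 16*π := by positivity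
  constructor
  · rw [hbeta]
    apply mul_le_mul_of_nonneg_left _ (le_of_lt hπ)
    linarith
  · rw [hbeta]
    apply mul_le_mul_of_nonneg_left _ (le_of_lt hπ)
    linarith

lemma base_tendsto_zero : Tendsto (fun A : ℝ => A/(A^2-1)) atTop (nhds 0) := by
  have h : Tendsto (fun A : ℝ => A - 1/A) atTop atTop := by
    refine tendsto_atTop_mono' _ ?_ (tendsto_atTop_add_const_right _ (-1) tendsto_id)
    filter_upwards [eventually_gt_atTop (1:ℝ)] with A hA
    have : 1/A ≤ 1 := by rw [div_le_one (by linarith)]; linarith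
    simp only [id_eq]
    linarith
  have := Tendsto.div_atTop (tendsto_const_nhds (x := (1:ℝ))) h
  refine this.congr' ?_
  filter_upwards [eventually_gt_atTop (1:ℝ)] with A hA
  have hA0 : A ≠ 0 := by linarith
  have hA2 : (1:ℝ) < A^2 := one_lt_pow₀ hA (by norm_num)
  have h1 : (0:ℝ) < A^2 - 1 := by linarith
  have h0 : (0:ℝ) < A - 1/A := by
    have : 1/A < 1 := by rw [div_lt_one (by linarith)]; linarith
    linarith
  rw [div_eq_div_iff h0.ne' h1.ne']
  field_simp

lemma betaL_tendsto_zero : Tendsto betaL atTop (nhds 0) := by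
  have hlow : Tendsto (fun A : ℝ => 16*π*(A/(A^2-1))) atTop (nhds 0) := by
    have := base_tendsto_zero.const_mul (16*π)
    simpa using this
  have hup : Tendsto (fun A : ℝ => 16*π*(4*A/(3*(A^2-1)))) atTop (nhds 0) := by
    have := base_tendsto_zero.const_mul (16*π*(4/3))
    refine (by simpa using this : Tendsto (fun A : ℝ => 16*π*(4/3)*(A/(A^2-1))) atTop (nhds 0)).congr' ?_
    filter_upwards [eventually_gt_atTop (1:ℝ)] with A hA
    have hA2 : (1:ℝ) < A^2 := one_lt_pow₀ hA (by norm_num)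
    have h1 : A^2 - 1 ≠ 0 := by linarith
    field_simp
  refine tendsto_of_tendsto_of_tendsto_of_le_of_le' hlow hup ?_ ?_
  · filter_upwards [eventually_gt_atTop (1:ℝ)] with A hA
    exact (betaL_bounds hA).1
  · filter_upwards [eventually_gt_atTop (1:ℝ)] with A hA
    exact (betaL_bounds hA).2

lemma betaL_tendsto_atTop : Tendsto betaL (nhdsWithin 1 (Set.Ioi 1)) atTop := by
  have hlow : Tendsto (fun A : ℝ => 16*π*(A/(A^2-1))) (nhdsWithin 1 (Set.Ioi 1)) atTop := by
    have hf : Tendsto (fun A : ℝ => 16*π*A/(A+1)) (nhdsWithin 1 (Set.Ioi 1)) (nhds (8*π)) := by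
      have hc : ContinuousAt (fun A : ℝ => 16*π*A/(A+1)) 1 :=
        (continuousAt_const.mul continuousAt_id).div
          (continuousAt_id.add continuousAt_const) (by norm_num)
      have := hc.tendsto.mono_left
        (nhdsWithin_le_nhds (a := (1:ℝ)) (s := Set.Ioi 1))
      convert this using 2
      norm_num
      ring
    have hg : Tendsto (fun A : ℝ => (A-1)⁻¹) (nhdsWithin 1 (Set.Ioi 1)) atTop := by
      apply tendsto_inv_nhdsGT_zero.comp
      rw [tendsto_nhdsWithin_iff]
      constructor
      · have : ContinuousAt (fun A : ℝ => A - 1) 1 := continuousAt_id.sub continuousAt_const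
        have h2 := this.tendsto.mono_left (nhdsWithin_le_nhds (s := Set.Ioi 1))
        simpa using h2
      · filter_upwards [eventually_mem_nhdsWithin] with A hA
        simp only [Set.mem_Ioi] at hA ⊢
        linarith
    have := Filter.Tendsto.pos_mul_atTop (by positivity : (0:ℝ) < 8*π) hf hg
    refine this.congr' ?_
    filter_upwards [eventually_mem_nhdsWithin] with A hA
    simp only [Set.mem_Ioi] at hA
    have hA2 : (1:ℝ) < A^2 := one_lt_pow₀ hA (by norm_num)
    have h1 : A + 1 ≠ 0 := by linarith
    have h2 : A - 1 ≠ 0 := by linarith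
    have h3 : A^2 - 1 ≠ 0 := by linarith
    field_simp
    ring
  refine tendsto_atTop_mono' _ ?_ hlow
  filter_upwards [eventually_mem_nhdsWithin] with A hA
  exact (betaL_bounds hA).1

lemma betaL_deriv_neg {x : ℝ} (hx : 1 < x) :
    16*π*((2 - (x^2+7)/(3*(x^2-1)^2)) - x*(Real.log (x+1) - Real.log (x-1))) < 0 := by
  have hx0 : (0:ℝ) < x := by linarith
  have hx2 : (1:ℝ) < x^2 := one_lt_pow₀ hx (by norm_num)
  have hL := key_lower hx
  have hxL : 2 ≤ x*(Real.log (x+1) - Real.log (x-1)) := by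
    calc (2:ℝ) = x * (2/x) := by field_simp
    _ ≤ x*(Real.log (x+1) - Real.log (x-1)) := mul_le_mul_of_nonneg_left hL (le_of_lt hx0)
  have ht : (0:ℝ) < (x^2+7)/(3*(x^2-1)^2) :=
    div_pos (by linarith) (mul_pos (by norm_num) (pow_pos (by linarith) 2))
  refine mul_neg_of_pos_of_neg (by positivity) (by linarith)

lemma betaL_strictAntiOn : StrictAntiOn betaL (Set.Ioi 1) := by
  refine strictAntiOn_of_deriv_neg (convex_Ioi 1) ?_ ?_
  · intro x hx
    exact (betaL_hasDerivAt hx).continuousAt.continuousWithinAt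
  · intro x hx
    rw [interior_Ioi] at hx
    rw [(betaL_hasDerivAt hx).deriv]
    exact betaL_deriv_neg hx

lemma betaL_pos {A : ℝ} (hA : 1 < A) : 0 < betaL A := by
  have h := (betaL_bounds hA).1
  have hA2 : (1:ℝ) < A^2 := one_lt_pow₀ hA (by norm_num)
  have : (0:ℝ) < 16*π*(A/(A^2-1)) := by
    apply mul_pos (by positivity)
    exact div_pos (by linarith) (by linarith)
  linarith

lemma betaL_surjOn : Set.SurjOn betaL (Set.Ioi 1) (Set.Ioi 0) := by
  intro t ht
  simp only [Set.mem_Ioi] at ht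
  -- find a with betaL a > t
  have h1 : ∀ᶠ A in nhdsWithin 1 (Set.Ioi 1), t < betaL A :=
    betaL_tendsto_atTop.eventually_gt_atTop t
  obtain ⟨a, hta, ha⟩ := (h1.and eventually_mem_nhdsWithin).exists
  simp only [Set.mem_Ioi] at ha
  -- find b > a with betaL b < t
  have h2 : ∀ᶠ A in atTop, betaL A < t := betaL_tendsto_zero.eventually_lt_const ht
  obtain ⟨b, hb1, hb2⟩ := (h2.and (eventually_gt_atTop a)).exists
  have hab : a ≤ b := le_of_lt hb2
  have hsub : Set.Icc a b ⊆ Set.Ioi 1 := fun x hx => lt_of_lt_of_le ha hx.1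
  have hcont : ContinuousOn betaL (Set.Icc a b) := fun x hx =>
    ((betaL_hasDerivAt (hsub hx)).continuousAt).continuousWithinAt
  have := intermediate_value_Icc' hab hcont
  have htmem : t ∈ Set.Icc (betaL b) (betaL a) := ⟨le_of_lt hb1, le_of_lt hta⟩
  obtain ⟨c, hc, hct⟩ := this htmem
  exact ⟨c, hsub hc, hct⟩

lemma betaL_bijOn : Set.BijOn betaL (Set.Ioi 1) (Set.Ioi 0) :=
  ⟨fun A hA => Set.mem_Ioi.mpr (betaL_pos hA), betaL_strictAntiOn.injOn, betaL_surjOn⟩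

theorem betaL_strictAnti_bijective :
    StrictAntiOn betaL (Set.Ioi 1) ∧
    Set.BijOn betaL (Set.Ioi 1) (Set.Ioi 0) ∧
    (∀ A : ℝ, 1 < A → 0 < betaL A) ∧
    Tendsto betaL (nhdsWithin 1 (Set.Ioi 1)) atTop ∧
    Tendsto betaL atTop (nhds 0) ∧
    ∃ γ : ℝ → ℝ, Set.BijOn γ (Set.Ioi 0) (Set.Ioi 1) ∧
      (∀ t ∈ Set.Ioi (0 : ℝ), betaL (γ t) = t) ∧
      (∀ A ∈ Set.Ioi (1 : ℝ), γ (betaL A) = A) := by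
  refine ⟨betaL_strictAntiOn, betaL_bijOn, fun A hA => betaL_pos hA,
    betaL_tendsto_atTop, betaL_tendsto_zero, ?_⟩
  refine ⟨Function.invFunOn betaL (Set.Ioi 1), ?_, ?_, ?_⟩
  · exact (betaL_bijOn.invOn_invFunOn.symm).bijOn betaL_surjOn.mapsTo_invFunOn betaL_bijOn.mapsTo
  · exact fun t ht => betaL_bijOn.invOn_invFunOn.2 ht
  · exact fun A hA => betaL_bijOn.invOn_invFunOn.1 hA
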